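/- arXiv:1905.02404 — 5 statements merged into one kernel-verified Lean document; each statement's English description precedes it below -/
import Mathlib

section
/- If δu_i[u] is the characteristic of a symmetry of F^a[u] = 0 and δρ_a[u,ρ] are arbitrary local functions, then the characteristic {δu_i, δρ_a} is an on-shell symmetry of the auxiliary Lagrangian L̂[u,ρ] = F^a[u]ρ_a with flux K^μ = 0, and the corresponding Noether current of the Euler–Lagrange system F^a = 0, E^i(L̂) = 0 equals the boundary current j^μ_{(Fρ)}, which does not depend on the choice of δρ_a. -/
namespace Paper

/-- The base space ℝ^{D+1} (coordinates x^μ, μ = 0,…,D). -/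
abbrev Ed (D : ℕ) := Fin (D + 1) → ℝ

/-- Partial derivative ∂_μ of a real function on ℝ^{D+1}. -/
noncomputable def pd {D : ℕ} (μ : Fin (D + 1)) (f : Ed D → ℝ) : Ed D → ℝ :=
  fun x => fderiv ℝ f x (Pi.single μ 1)

/-- Iterated partial derivatives ∂_{μ₁…μ_k} along a list of directions. -/
noncomputable def pds {D : ℕ} : List (Fin (D + 1)) → (Ed D → ℝ) → Ed D → ℝ
  | [], f => f
  | μ :: l, f => pd μ (pds l f)

/-- Total divergence D_μ J^μ of a current. -/
noncomputable def Dvg {D : ℕ} (J : Fin (D + 1) → Ed D → ℝ) : Ed D → ℝ :=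
  fun x => ∑ μ, pd μ (J μ) x

/-- Multi-indices of order ≤ m: ordered tuples of coordinate directions. -/
abbrev MIdx (m D : ℕ) := Σ k : Fin (m + 1), (Fin (k : ℕ) → Fin (D + 1))

def MIdx.toList {m D : ℕ} (β : MIdx m D) : List (Fin (D + 1)) := List.ofFn β.2

def zeroIdx {m D : ℕ} : MIdx m D := ⟨⟨0, Nat.succ_pos m⟩, fun t => t.elim0⟩

def oneIdx {m D : ℕ} (hm : 0 < m) (μ : Fin (D + 1)) : MIdx m D :=
  ⟨⟨1, Nat.succ_lt_succ hm⟩, fun _ => μ⟩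

/-- The jet space of order m for fields indexed by ι. -/
abbrev Jet (ι : Type) (m D : ℕ) := (ι × MIdx m D) → ℝ

/-- The m-jet of a field configuration at a point. -/
noncomputable def jet {D : ℕ} {ι : Type} (m : ℕ) (u : ι → Ed D → ℝ) (x : Ed D) :
    Jet ι m D := fun c => pds (MIdx.toList c.2) (u c.1) x

/-- Evaluation of a local function on a field configuration: f[u](x). -/
noncomputable def realize {D : ℕ} {ι : Type} (m : ℕ) (f : Ed D × Jet ι m D → ℝ)
    (u : ι → Ed D → ℝ) : Ed D → ℝ :=
  fun x => f (x, jet m u x)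

/-- Partial derivative ∂f/∂(∂_β u_i) of a local function w.r.t. a jet coordinate. -/
noncomputable def jpd {D : ℕ} {ι : Type} [Fintype ι] [DecidableEq ι] {m : ℕ}
    (f : Ed D × Jet ι m D → ℝ) (c : ι × MIdx m D) : Ed D × Jet ι m D → ℝ :=
  fun p => fderiv ℝ f p (0, Pi.single c 1)

/-- Smooth fields on Ω. -/
def SmoothFields {D : ℕ} {ι : Type} (Ω : Set (Ed D)) (u : ι → Ed D → ℝ) : Prop :=
  ∀ i, ContDiffOn ℝ (⊤ : ℕ∞) (u i) Ω

/-- Variation δf of a local function along a characteristic, the latter given by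
its realized component functions v_i. -/
noncomputable def variation {D : ℕ} {ι : Type} [Fintype ι] [DecidableEq ι] (m : ℕ)
    (f : Ed D × Jet ι m D → ℝ) (u v : ι → Ed D → ℝ) : Ed D → ℝ :=
  fun x => ∑ c : ι × MIdx m D, jpd f c (x, jet m u x) * pds (MIdx.toList c.2) (v c.1) x

/-- Euler–Lagrange derivative E^i(f) of a local function, evaluated on u. -/
noncomputable def EL {D : ℕ} {ι : Type} [Fintype ι] [DecidableEq ι] (m : ℕ)
    (f : Ed D × Jet ι m D → ℝ) (u : ι → Ed D → ℝ) (i : ι) : Ed D → ℝ :=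
  fun x => ∑ β : MIdx m D, (-1 : ℝ) ^ (β.1 : ℕ) *
    pds (MIdx.toList β) (fun y => jpd f (i, β) (y, jet m u y)) x

/-- The general integration-by-parts boundary current 𝒢^μ. -/
noncomputable def bdryG {D : ℕ} {A : Type} [Fintype A] (m : ℕ)
    (G : A × MIdx m D → Ed D → ℝ) (ε : A → Ed D → ℝ) (μ : Fin (D + 1)) : Ed D → ℝ :=
  fun x => ∑ a : A, ∑ k : Fin m, ∑ lam : Fin (k : ℕ) → Fin (D + 1),
    ∑ j ∈ Finset.range ((k : ℕ) + 1),
      (-1 : ℝ) ^ j *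
        pds ((List.ofFn lam).take j)
          (G (a, ⟨⟨(k : ℕ) + 1, Nat.succ_lt_succ k.isLt⟩, Fin.cons μ lam⟩)) x *
        pds ((List.ofFn lam).drop j) (ε a) x

/-- Ĝ_α = Σ_β (−1)^{|β|} ∂_β G_α^β. -/
noncomputable def hatG {D : ℕ} {A : Type} (m : ℕ)
    (G : A × MIdx m D → Ed D → ℝ) (a : A) : Ed D → ℝ :=
  fun x => ∑ β : MIdx m D, (-1 : ℝ) ^ (β.1 : ℕ) * pds (MIdx.toList β) (G (a, β)) x

/-- The boundary current j^μ of a local function f w.r.t. a characteristic v at u. -/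
noncomputable def lfBdry {D : ℕ} {ι : Type} [Fintype ι] [DecidableEq ι] (m : ℕ)
    (f : Ed D × Jet ι m D → ℝ) (u v : ι → Ed D → ℝ) (μ : Fin (D + 1)) : Ed D → ℝ :=
  bdryG m (fun c x => jpd f c (x, jet m u x)) v μ

/-- j^μ_{(Fρ)}: the boundary current of F^aρ_a in which ρ_a is not differentiated
(ρ_a substituted after the differentiations). -/
noncomputable def jFrho {D : ℕ} {ι κ : Type} [Fintype ι] [DecidableEq ι] [Fintype κ] (m : ℕ)
    (F : κ → Ed D × Jet ι m D → ℝ) (u : ι → Ed D → ℝ) (ρ : κ → Ed D → ℝ)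
    (v : ι → Ed D → ℝ) (μ : Fin (D + 1)) : Ed D → ℝ :=
  bdryG m (fun c x => ∑ a, jpd (F a) c (x, jet m u x) * ρ a x) v μ

/-- j^μ_{(F̃q)}|_{F̃=F}: only q_a is differentiated, F^a treated as a function of x. -/
noncomputable def jFtilq {D : ℕ} {ι κ : Type} [Fintype ι] [DecidableEq ι] [Fintype κ] (m : ℕ)
    (F q : κ → Ed D × Jet ι m D → ℝ) (u v : ι → Ed D → ℝ) (μ : Fin (D + 1)) : Ed D → ℝ :=
  bdryG m (fun c x => ∑ a, F a (x, jet m u x) * jpd (q a) c (x, jet m u x)) v μ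

/-- The adjoint equations' left-hand side E^i(F^aρ_a), with the ρ_a treated as
independent fields and their values substituted after the differentiations. -/
noncomputable def adjointOp {D : ℕ} {ι κ : Type} [Fintype ι] [DecidableEq ι] [Fintype κ] (m : ℕ)
    (F : κ → Ed D × Jet ι m D → ℝ) (u : ι → Ed D → ℝ) (ρ : κ → Ed D → ℝ) (i : ι) : Ed D → ℝ :=
  fun x => ∑ β : MIdx m D, (-1 : ℝ) ^ (β.1 : ℕ) *
    pds (MIdx.toList β) (fun y => ∑ a, jpd (F a) (i, β) (y, jet m u y) * ρ a y) x

/-- Solutions of the system F^a = 0 on Ω. -/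
def IsSol {D : ℕ} {ι κ : Type} (m : ℕ) (Ω : Set (Ed D)) (F : κ → Ed D × Jet ι m D → ℝ)
    (u : ι → Ed D → ℝ) : Prop :=
  SmoothFields Ω u ∧ ∀ a, ∀ x ∈ Ω, realize m (F a) u x = 0

/-- A characteristic δu (given by local functions) is a symmetry of F = 0. -/
def IsSymmetry {D : ℕ} {ι κ : Type} [Fintype ι] [DecidableEq ι] (m : ℕ) (Ω : Set (Ed D))
    (F : κ → Ed D × Jet ι m D → ℝ) (δu : ι → Ed D × Jet ι m D → ℝ) : Prop :=
  ∀ u, IsSol m Ω F u → ∀ a, ∀ x ∈ Ω,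
    variation m (F a) u (fun i => realize m (δu i) u) x = 0

/-- The u-part of a combined (u, ρ) jet. -/
def uPartJet {D : ℕ} {ι κ : Type} {m : ℕ} (z : Jet (ι ⊕ κ) m D) : Jet ι m D :=
  fun c => z (Sum.inl c.1, c.2)

/-- The auxiliary Lagrangian L̂ = F^a ρ_a as a local function of the combined fields (u, ρ). -/
noncomputable def Lhat {D : ℕ} {ι κ : Type} [Fintype κ] {m : ℕ}
    (F : κ → Ed D × Jet ι m D → ℝ) : Ed D × Jet (ι ⊕ κ) m D → ℝ :=
  fun p => ∑ a, F a (p.1, uPartJet p.2) * p.2 (Sum.inr a, zeroIdx)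

/-- The product F^a q_a as a single local function of u. -/
noncomputable def prodFq {D : ℕ} {ι κ : Type} [Fintype κ] {m : ℕ}
    (F q : κ → Ed D × Jet ι m D → ℝ) : Ed D × Jet ι m D → ℝ :=
  fun p => ∑ a, F a p * q a p

/-- Conservation law multiplier: F^a q_a = D_μ J^μ for every smooth u. -/
def Multiplier {D : ℕ} {ι κ : Type} [Fintype κ] (m : ℕ) (Ω : Set (Ed D))
    (F q : κ → Ed D × Jet ι m D → ℝ) (J : Fin (D + 1) → Ed D × Jet ι m D → ℝ) : Prop :=
  ∀ u, SmoothFields Ω u → ∀ x ∈ Ω,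
    (∑ a, realize m (F a) u x * realize m (q a) u x) = Dvg (fun μ => realize m (J μ) u) x

/-- Equivalence of configuration-indexed local currents relative to the system F = 0:
the difference is an identically conserved local current plus a local current
vanishing on all solutions. -/
def EquivCurrents {D : ℕ} {ι κ : Type} [Fintype ι] (m : ℕ) (Ω : Set (Ed D))
    (F : κ → Ed D × Jet ι m D → ℝ)
    (C1 C2 : (ι → Ed D → ℝ) → Fin (D + 1) → Ed D → ℝ) : Prop :=
  ∃ (m' : ℕ) (Jb Jh : Fin (D + 1) → Ed D × Jet ι m' D → ℝ),
    (∀ μ, ContDiff ℝ (⊤ : ℕ∞) (Jb μ)) ∧ (∀ μ, ContDiff ℝ (⊤ : ℕ∞) (Jh μ)) ∧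
    (∀ u, SmoothFields Ω u → ∀ μ, ∀ x ∈ Ω,
      C1 u μ x - C2 u μ x = realize m' (Jb μ) u x + realize m' (Jh μ) u x) ∧
    (∀ u, SmoothFields Ω u → ∀ x ∈ Ω, Dvg (fun μ => realize m' (Jb μ) u) x = 0) ∧
    (∀ u, IsSol m Ω F u → ∀ μ, ∀ x ∈ Ω, realize m' (Jh μ) u x = 0)

/-- Linearization G^a of F^a around the configuration u. -/
noncomputable def linearize {D : ℕ} {ι κ : Type} [Fintype ι] (m : ℕ)
    (F : κ → Ed D × Jet ι m D → ℝ) (u : ι → Ed D → ℝ) :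
    κ → Ed D × Jet ι m D → ℝ :=
  fun a p => fderiv ℝ (F a) (p.1, jet m u p.1) ((0 : Ed D), p.2)

/- ### Extended systems: fields (u, g), with F depending on g but not on its derivatives. -/

/-- Domain of extended local functions: base point, jet of u, and the values of g. -/
abbrev PJet (ι γ : Type) (m D : ℕ) := Ed D × Jet ι m D × (γ → ℝ)

noncomputable def realizeP {D : ℕ} {ι γ : Type} (m : ℕ)
    (f : PJet ι γ m D → ℝ) (u : ι → Ed D → ℝ) (g : γ → Ed D → ℝ) : Ed D → ℝ :=
  fun x => f (x, jet m u x, fun l => g l x)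

/-- ∂f/∂g_l for extended local functions. -/
noncomputable def gpd {D : ℕ} {ι γ : Type} [Fintype ι] [Fintype γ] [DecidableEq γ] {m : ℕ}
    (f : PJet ι γ m D → ℝ) (l : γ) : PJet ι γ m D → ℝ :=
  fun p => fderiv ℝ f p (0, 0, Pi.single l 1)

/-- ∂f/∂(∂_β u_i) for extended local functions. -/
noncomputable def jpdP {D : ℕ} {ι γ : Type} [Fintype ι] [DecidableEq ι] [Fintype γ] {m : ℕ}
    (f : PJet ι γ m D → ℝ) (c : ι × MIdx m D) : PJet ι γ m D → ℝ :=
  fun p => fderiv ℝ f p (0, Pi.single c 1, 0)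

/-- An extended local function viewed as a local function of the combined fields (u, g). -/
noncomputable def liftP {D : ℕ} {ι γ : Type} {m : ℕ} (f : PJet ι γ m D → ℝ) :
    Ed D × Jet (ι ⊕ γ) m D → ℝ :=
  fun p => f (p.1, fun c => p.2 (Sum.inl c.1, c.2), fun l => p.2 (Sum.inr l, zeroIdx))

/-- Setting all the derivatives of g to zero in a local function of (u, g). -/
noncomputable def dropGDerivs {D : ℕ} {ι γ : Type} {m : ℕ}
    (f : Ed D × Jet (ι ⊕ γ) m D → ℝ) : PJet ι γ m D → ℝ :=
  fun p => f (p.1, fun w =>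
    match w with
    | (Sum.inl i, β) => p.2.1 (i, β)
    | (Sum.inr l, β) => if (β.1 : ℕ) = 0 then p.2.2 l else 0)

/-- Parameterized conservation law multiplier: F^a q_a = D_μ J^μ for every smooth u
and every constant g. -/
def ParamMultiplier {D : ℕ} {ι γ κ : Type} [Fintype κ] (m : ℕ) (Ω : Set (Ed D))
    (F q : κ → PJet ι γ m D → ℝ) (J : Fin (D + 1) → PJet ι γ m D → ℝ) : Prop :=
  ∀ u, SmoothFields Ω u → ∀ c : γ → ℝ, ∀ x ∈ Ω,
    (∑ a, F a (x, jet m u x, c) * q a (x, jet m u x, c)) =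
      Dvg (fun μ y => J μ (y, jet m u y, c)) x

/-- Solutions of the extended system F^a = 0, ∂_μ g_l = 0 on Ω. -/
def ExtSol {D : ℕ} {ι γ κ : Type} (m : ℕ) (Ω : Set (Ed D))
    (F : κ → PJet ι γ m D → ℝ) (u : ι → Ed D → ℝ) (g : γ → Ed D → ℝ) : Prop :=
  SmoothFields Ω u ∧ SmoothFields Ω g ∧
    (∀ a, ∀ x ∈ Ω, realizeP m (F a) u g x = 0) ∧
    (∀ l μ, ∀ x ∈ Ω, pd μ (g l) x = 0)

/-- Conservation law multiplier {q_a, θ^{μl}} for the extended system, with current J. -/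
def ExtMultiplier {D : ℕ} {ι γ κ : Type} [Fintype κ] [Fintype γ] (m : ℕ) (Ω : Set (Ed D))
    (F q : κ → PJet ι γ m D → ℝ) (θ : Fin (D + 1) → γ → PJet ι γ m D → ℝ)
    (J : Fin (D + 1) → PJet ι γ m D → ℝ) : Prop :=
  ∀ u g, SmoothFields Ω u → SmoothFields Ω g → ∀ x ∈ Ω,
    ((∑ a, realizeP m (F a) u g x * realizeP m (q a) u g x) +
      ∑ μ, ∑ l, pd μ (g l) x * realizeP m (θ μ l) u g x) =
    Dvg (fun μ => realizeP m (J μ) u g) x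

/-- j^μ_{(Fρ)} for an extended system. -/
noncomputable def jFrhoP {D : ℕ} {ι γ κ : Type} [Fintype ι] [DecidableEq ι] [Fintype γ]
    [Fintype κ] (m : ℕ) (F : κ → PJet ι γ m D → ℝ) (u : ι → Ed D → ℝ) (g : γ → Ed D → ℝ)
    (ρ : κ → Ed D → ℝ) (v : ι → Ed D → ℝ) (μ : Fin (D + 1)) : Ed D → ℝ :=
  bdryG m (fun c x => ∑ a, jpdP (F a) c (x, jet m u x, fun l => g l x) * ρ a x) v μ

/-- j^μ_{(F̃q)}|_{F̃=F} for an extended system. -/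
noncomputable def jFtilqP {D : ℕ} {ι γ κ : Type} [Fintype ι] [DecidableEq ι] [Fintype γ]
    [Fintype κ] (m : ℕ) (F q : κ → PJet ι γ m D → ℝ) (u : ι → Ed D → ℝ) (g : γ → Ed D → ℝ)
    (v : ι → Ed D → ℝ) (μ : Fin (D + 1)) : Ed D → ℝ :=
  bdryG m (fun c x =>
    ∑ a, realizeP m (F a) u g x * jpdP (q a) c (x, jet m u x, fun l => g l x)) v μ

/-- The adjoint equations E^i(F^aρ_a) for an extended system. -/
noncomputable def adjointOpP {D : ℕ} {ι γ κ : Type} [Fintype ι] [DecidableEq ι] [Fintype γ]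
    [Fintype κ] (m : ℕ) (F : κ → PJet ι γ m D → ℝ) (u : ι → Ed D → ℝ) (g : γ → Ed D → ℝ)
    (ρ : κ → Ed D → ℝ) (i : ι) : Ed D → ℝ :=
  fun x => ∑ β : MIdx m D, (-1 : ℝ) ^ (β.1 : ℕ) *
    pds (MIdx.toList β)
      (fun y => ∑ a, jpdP (F a) (i, β) (y, jet m u y, fun l => g l y) * ρ a y) x

/-- Equivalence of configuration-indexed currents relative to the extended system. -/
def EquivCurrentsExt {D : ℕ} {ι γ κ : Type} [Fintype ι] [Fintype γ] (m : ℕ) (Ω : Set (Ed D))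
    (F : κ → PJet ι γ m D → ℝ)
    (C1 C2 : (ι → Ed D → ℝ) → (γ → Ed D → ℝ) → Fin (D + 1) → Ed D → ℝ) : Prop :=
  ∃ (m' : ℕ) (Jb Jh : Fin (D + 1) → Ed D × Jet (ι ⊕ γ) m' D → ℝ),
    (∀ μ, ContDiff ℝ (⊤ : ℕ∞) (Jb μ)) ∧ (∀ μ, ContDiff ℝ (⊤ : ℕ∞) (Jh μ)) ∧
    (∀ u g, SmoothFields Ω u → SmoothFields Ω g → ∀ μ, ∀ x ∈ Ω,
      C1 u g μ x - C2 u g μ x =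
        realize m' (Jb μ) (Sum.elim u g) x + realize m' (Jh μ) (Sum.elim u g) x) ∧
    (∀ u g, SmoothFields Ω u → SmoothFields Ω g → ∀ x ∈ Ω,
      Dvg (fun μ => realize m' (Jb μ) (Sum.elim u g)) x = 0) ∧
    (∀ u g, ExtSol m Ω F u g → ∀ μ, ∀ x ∈ Ω, realize m' (Jh μ) (Sum.elim u g) x = 0)

/-- The auxiliary Lagrangian Ľ = F^aρ_a + (∂_μ g_l)ϑ^{μl} of an extended system,
as a local function of the combined fields ((u, g), (ρ, ϑ)). -/
noncomputable def Lcheck {D : ℕ} {ι γ κ : Type} [Fintype κ] [Fintype γ] {m : ℕ} (hm : 0 < m)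
    (F : κ → PJet ι γ m D → ℝ) :
    Ed D × Jet ((ι ⊕ γ) ⊕ (κ ⊕ Fin (D + 1) × γ)) m D → ℝ :=
  fun p =>
    (∑ a, F a (p.1, fun c => p.2 (Sum.inl (Sum.inl c.1), c.2),
        fun l => p.2 (Sum.inl (Sum.inr l), zeroIdx)) * p.2 (Sum.inr (Sum.inl a), zeroIdx)) +
    ∑ μ, ∑ l, p.2 (Sum.inl (Sum.inr l), oneIdx hm μ) * p.2 (Sum.inr (Sum.inr (μ, l)), zeroIdx)

section Statement2Aux

variable {D m : ℕ} {ι κ : Type} [Fintype ι] [DecidableEq ι] [Fintype κ] [DecidableEq κ]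

lemma pd_zero (μ : Fin (D + 1)) : pd μ (fun _ => (0 : ℝ)) = fun _ => 0 := by
  funext x; simp [pd]

lemma pds_zero (l : List (Fin (D + 1))) : pds l (fun _ => (0 : ℝ)) = fun _ => 0 := by
  induction l with
  | nil => rfl
  | cons μ l ih => simp [pds, ih, pd_zero]

/-- `uPartJet` as a continuous linear map. -/
noncomputable def uCLM (D m : ℕ) (ι κ : Type) : Jet (ι ⊕ κ) m D →L[ℝ] Jet ι m D :=
  ContinuousLinearMap.pi fun c => ContinuousLinearMap.proj (Sum.inl c.1, c.2)

lemma uCLM_apply (z : Jet (ι ⊕ κ) m D) : uCLM D m ι κ z = uPartJet z := rfl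

/-- `p ↦ (p.1, uPartJet p.2)` as a continuous linear map. -/
noncomputable def phiCLM (D m : ℕ) (ι κ : Type) :
    (Ed D × Jet (ι ⊕ κ) m D) →L[ℝ] Ed D × Jet ι m D :=
  (ContinuousLinearMap.fst ℝ _ _).prod
    ((uCLM D m ι κ).comp (ContinuousLinearMap.snd ℝ _ _))

lemma phiCLM_apply (p : Ed D × Jet (ι ⊕ κ) m D) :
    phiCLM D m ι κ p = (p.1, uPartJet p.2) := rfl

/-- Evaluation of a jet coordinate as a continuous linear map. -/
noncomputable def evCLM (D m : ℕ) (ι κ : Type) (w : (ι ⊕ κ) × MIdx m D) :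
    (Ed D × Jet (ι ⊕ κ) m D) →L[ℝ] ℝ :=
  (ContinuousLinearMap.proj w).comp (ContinuousLinearMap.snd ℝ _ _)

lemma hasFDerivAt_Lhat (F : κ → Ed D × Jet ι m D → ℝ)
    (hF : ∀ a, ContDiff ℝ (⊤ : ℕ∞) (F a)) (p : Ed D × Jet (ι ⊕ κ) m D) :
    HasFDerivAt (Lhat F)
      (∑ a, (F a (p.1, uPartJet p.2) • evCLM D m ι κ (Sum.inr a, zeroIdx) +
        p.2 (Sum.inr a, zeroIdx) •
          ((fderiv ℝ (F a) (p.1, uPartJet p.2)).comp (phiCLM D m ι κ)))) p := by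
  have hL : Lhat F = fun q : Ed D × Jet (ι ⊕ κ) m D =>
      ∑ a, F a (phiCLM D m ι κ q) * evCLM D m ι κ (Sum.inr a, zeroIdx) q := rfl
  rw [hL]
  apply HasFDerivAt.fun_sum
  intro a _
  have h1 : HasFDerivAt (fun q => F a (phiCLM D m ι κ q))
      ((fderiv ℝ (F a) (p.1, uPartJet p.2)).comp (phiCLM D m ι κ)) p := by
    have hd := ((hF a).differentiable (by simp) (phiCLM D m ι κ p)).hasFDerivAt
    have h := hd.comp p (phiCLM D m ι κ).hasFDerivAt
    exact h
  have h2 : HasFDerivAt (fun q : Ed D × Jet (ι ⊕ κ) m D =>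
      evCLM D m ι κ (Sum.inr a, zeroIdx) q) (evCLM D m ι κ (Sum.inr a, zeroIdx)) p :=
    (evCLM D m ι κ _).hasFDerivAt
  have := h1.mul h2
  exact this

lemma jpd_Lhat (F : κ → Ed D × Jet ι m D → ℝ)
    (hF : ∀ a, ContDiff ℝ (⊤ : ℕ∞) (F a)) (c : (ι ⊕ κ) × MIdx m D)
    (p : Ed D × Jet (ι ⊕ κ) m D) :
    jpd (Lhat F) c p =
      ∑ a, (F a (p.1, uPartJet p.2) *
          (Pi.single c (1 : ℝ) : Jet (ι ⊕ κ) m D) (Sum.inr a, zeroIdx) +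
        p.2 (Sum.inr a, zeroIdx) *
          fderiv ℝ (F a) (p.1, uPartJet p.2)
            (0, uPartJet (Pi.single c (1 : ℝ) : Jet (ι ⊕ κ) m D))) := by
  have := (hasFDerivAt_Lhat F hF p).fderiv
  simp only [jpd, this, ContinuousLinearMap.sum_apply, ContinuousLinearMap.add_apply,
    ContinuousLinearMap.coe_smul', Pi.smul_apply, ContinuousLinearMap.coe_comp',
    Function.comp_apply, smul_eq_mul]
  rfl

lemma uPart_single_inl (i : ι) (β : MIdx m D) :
    uPartJet (Pi.single ((Sum.inl i : ι ⊕ κ), β) (1 : ℝ)) = Pi.single (i, β) (1 : ℝ) := by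
  funext c
  simp only [uPartJet, Pi.single_apply, Prod.mk.injEq, Sum.inl.injEq]
  by_cases h : c = (i, β)
  · subst h; simp
  · rw [if_neg, if_neg h]
    rintro ⟨h1, h2⟩
    exact h (Prod.ext h1 h2)

lemma uPart_single_inr (b : κ) (β : MIdx m D) :
    uPartJet (Pi.single ((Sum.inr b : ι ⊕ κ), β) (1 : ℝ)) = 0 := by
  funext c
  simp [uPartJet, Pi.single_apply]

lemma jpd_Lhat_inl (F : κ → Ed D × Jet ι m D → ℝ)
    (hF : ∀ a, ContDiff ℝ (⊤ : ℕ∞) (F a)) (i : ι) (β : MIdx m D)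
    (p : Ed D × Jet (ι ⊕ κ) m D) :
    jpd (Lhat F) (Sum.inl i, β) p =
      ∑ a, jpd (F a) (i, β) (p.1, uPartJet p.2) * p.2 (Sum.inr a, zeroIdx) := by
  rw [jpd_Lhat F hF]
  refine Finset.sum_congr rfl fun a _ => ?_
  rw [uPart_single_inl]
  have h0 : (Pi.single ((Sum.inl i : ι ⊕ κ), β) (1 : ℝ) : Jet (ι ⊕ κ) m D)
      (Sum.inr a, zeroIdx) = 0 := by
    simp [Pi.single_apply]
  rw [h0]
  simp [jpd, mul_comm]

lemma jpd_Lhat_inr (F : κ → Ed D × Jet ι m D → ℝ)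
    (hF : ∀ a, ContDiff ℝ (⊤ : ℕ∞) (F a)) (b : κ) (β : MIdx m D)
    (p : Ed D × Jet (ι ⊕ κ) m D) :
    jpd (Lhat F) (Sum.inr b, β) p =
      if β = zeroIdx then F b (p.1, uPartJet p.2) else 0 := by
  rw [jpd_Lhat F hF]
  rw [show uPartJet (Pi.single ((Sum.inr b : ι ⊕ κ), β) (1 : ℝ)) = 0 from
    uPart_single_inr b β]
  have hz : ((0 : Ed D), (0 : Jet ι m D)) = (0 : Ed D × Jet ι m D) := rfl
  simp only [hz, map_zero, mul_zero, add_zero]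
  by_cases hβ : β = zeroIdx
  · subst hβ
    simp [Pi.single_apply, Prod.ext_iff, mul_ite]
  · rw [if_neg hβ]
    refine Finset.sum_eq_zero fun a _ => ?_
    rw [Pi.single_apply, if_neg, mul_zero]
    rintro h
    rw [Prod.ext_iff] at h
    exact hβ (h.2.symm)

lemma uPart_jet (u : ι → Ed D → ℝ) (ρ : κ → Ed D → ℝ) (x : Ed D) :
    uPartJet (jet m (Sum.elim u ρ) x) = jet m u x := rfl

lemma jet_inr_zero (u : ι → Ed D → ℝ) (ρ : κ → Ed D → ℝ) (a : κ) (x : Ed D) :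
    jet m (Sum.elim u ρ) x ((Sum.inr a : ι ⊕ κ), zeroIdx) = ρ a x := by
  simp [jet, MIdx.toList, zeroIdx, List.ofFn_zero, pds]

end Statement2Aux

/-- If δu is a symmetry characteristic of F = 0 and δρ is arbitrary, then
{δu, δρ} is an on-shell symmetry of L̂ = F^aρ_a with K^μ = 0, and the corresponding
Noether current of the system F^a = 0, E^i(L̂) = 0 equals j^μ_{(Fρ)}, independently of δρ. -/
theorem statement2 (D N M m : ℕ) (Ω : Set (Ed D)) (hΩ : IsOpen Ω)
    (F : Fin M → Ed D × Jet (Fin N) m D → ℝ) (hF : ∀ a, ContDiff ℝ (⊤ : ℕ∞) (F a))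
    (δu : Fin N → Ed D × Jet (Fin N) m D → ℝ) (hδu : ∀ i, ContDiff ℝ (⊤ : ℕ∞) (δu i))
    (hsym : IsSymmetry m Ω F δu)
    (δρ : Fin M → Ed D × Jet (Fin N ⊕ Fin M) m D → ℝ)
    (hδρ : ∀ a, ContDiff ℝ (⊤ : ℕ∞) (δρ a)) :
    -- {δu, δρ} is an on-shell symmetry of L̂ with K^μ = 0:
    (∀ (u : Fin N → Ed D → ℝ) (ρ : Fin M → Ed D → ℝ),
      SmoothFields Ω u → SmoothFields Ω ρ →
      (∀ a, ∀ x ∈ Ω, realize m (F a) u x = 0) →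
      (∀ i, ∀ x ∈ Ω, adjointOp m F u ρ i x = 0) →
      ∀ x ∈ Ω,
        variation m (Lhat F) (Sum.elim u ρ)
          (Sum.elim (fun i => realize m (δu i) u)
            (fun a => realize m (δρ a) (Sum.elim u ρ))) x = 0) ∧
    -- The Noether current (K^μ = 0) equals j^μ_{(Fρ)}, which is independent of δρ:
    (∀ (u : Fin N → Ed D → ℝ) (ρ : Fin M → Ed D → ℝ),
      SmoothFields Ω u → SmoothFields Ω ρ → ∀ μ, ∀ x ∈ Ω,
      lfBdry m (Lhat F) (Sum.elim u ρ)
        (Sum.elim (fun i => realize m (δu i) u)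
          (fun a => realize m (δρ a) (Sum.elim u ρ))) μ x
        = jFrho m F u ρ (fun i => realize m (δu i) u) μ x) := by
  constructor
  · -- on-shell symmetry with K = 0
    intro u ρ hu hρ hsol _ x hx
    set v : Fin N → Ed D → ℝ := fun i => realize m (δu i) u with hv
    set w : Fin M → Ed D → ℝ :=
      fun a => realize m (δρ a) (Sum.elim u ρ) with hw
    have hvar : ∀ a, variation m (F a) u v x = 0 :=
      fun a => hsym u ⟨hu, hsol⟩ a x hx
    have hF0 : ∀ b, F b (x, jet m u x) = 0 := fun b => hsol b x hx
    rw [variation, Fintype.sum_prod_type, Fintype.sum_sum_type]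
    simp only [jpd_Lhat_inl F hF, jpd_Lhat_inr F hF, uPart_jet, jet_inr_zero,
      Sum.elim_inl, Sum.elim_inr]
    have h2 : (∑ b : Fin M, ∑ β : MIdx m D,
        (if β = zeroIdx then F b (x, jet m u x) else 0) *
          pds (MIdx.toList β) (w b) x) = 0 := by
      refine Finset.sum_eq_zero fun b _ => Finset.sum_eq_zero fun β _ => ?_
      rw [hF0 b]
      simp
    have h1 : (∑ i : Fin N, ∑ β : MIdx m D,
        (∑ a, jpd (F a) (i, β) (x, jet m u x) * ρ a x) *
          pds (MIdx.toList β) (v i) x) = 0 := by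
      have hv0 : ∀ a : Fin M, (∑ i : Fin N, ∑ β : MIdx m D,
          jpd (F a) (i, β) (x, jet m u x) * pds (MIdx.toList β) (v i) x) = 0 := by
        intro a
        have h := hvar a
        rw [variation, Fintype.sum_prod_type] at h
        exact h
      calc (∑ i : Fin N, ∑ β : MIdx m D,
            (∑ a, jpd (F a) (i, β) (x, jet m u x) * ρ a x) *
              pds (MIdx.toList β) (v i) x)
          = ∑ i : Fin N, ∑ β : MIdx m D, ∑ a,
              (jpd (F a) (i, β) (x, jet m u x) * pds (MIdx.toList β) (v i) x) *
                ρ a x := by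
            refine Finset.sum_congr rfl fun i _ => Finset.sum_congr rfl fun β _ => ?_
            rw [Finset.sum_mul]
            exact Finset.sum_congr rfl fun a _ => by ring
        _ = ∑ i : Fin N, ∑ a, ∑ β : MIdx m D,
              (jpd (F a) (i, β) (x, jet m u x) * pds (MIdx.toList β) (v i) x) *
                ρ a x :=
            Finset.sum_congr rfl fun i _ => Finset.sum_comm
        _ = ∑ a, ∑ i : Fin N, ∑ β : MIdx m D,
              (jpd (F a) (i, β) (x, jet m u x) * pds (MIdx.toList β) (v i) x) *
                ρ a x := Finset.sum_comm
        _ = ∑ a, (∑ i : Fin N, ∑ β : MIdx m D,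
              jpd (F a) (i, β) (x, jet m u x) * pds (MIdx.toList β) (v i) x) *
                ρ a x := by
            refine Finset.sum_congr rfl fun a _ => ?_
            rw [Finset.sum_mul]
            exact Finset.sum_congr rfl fun i _ => by rw [Finset.sum_mul]
        _ = 0 := by simp [hv0]
    rw [h1, h2, add_zero]
  · -- the Noether current equals j^μ_{(Fρ)}
    intro u ρ hu hρ μ x hx
    have hfunA : ∀ (i : Fin N) (β : MIdx m D),
        (fun y => jpd (Lhat F) (Sum.inl i, β) (y, jet m (Sum.elim u ρ) y)) =
        (fun y => ∑ a, jpd (F a) (i, β) (y, jet m u y) * ρ a y) := by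
      intro i β
      funext y
      simp only [jpd_Lhat_inl F hF, uPart_jet, jet_inr_zero]
    have hfunB : ∀ (b : Fin M) (β : MIdx m D), β ≠ zeroIdx →
        (fun y => jpd (Lhat F) (Sum.inr b, β) (y, jet m (Sum.elim u ρ) y)) =
        (fun _ => (0 : ℝ)) := by
      intro b β hβ
      funext y
      rw [jpd_Lhat_inr F hF, if_neg hβ]
    simp only [lfBdry, jFrho, bdryG]
    rw [Fintype.sum_sum_type]
    have hz : ∀ b : Fin M, (∑ k : Fin m, ∑ lam : Fin (k : ℕ) → Fin (D + 1),
        ∑ j ∈ Finset.range ((k : ℕ) + 1), (-1 : ℝ) ^ j *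
          pds ((List.ofFn lam).take j)
            (fun y => jpd (Lhat F)
              ((Sum.inr b : Fin N ⊕ Fin M),
                (⟨⟨(k : ℕ) + 1, Nat.succ_lt_succ k.isLt⟩, Fin.cons μ lam⟩ : MIdx m D))
              (y, jet m (Sum.elim u ρ) y)) x *
          pds ((List.ofFn lam).drop j)
            (Sum.elim (fun i => realize m (δu i) u)
              (fun a => realize m (δρ a) (Sum.elim u ρ)) (Sum.inr b)) x) = 0 := by
      intro b
      refine Finset.sum_eq_zero fun k _ => Finset.sum_eq_zero fun lam _ =>
        Finset.sum_eq_zero fun j _ => ?_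
      rw [hfunB b _ (by
        intro h
        have h' := congrArg (fun β : MIdx m D => (β.1 : ℕ)) h
        simp [zeroIdx] at h'), pds_zero]
      simp
    rw [Finset.sum_eq_zero fun b _ => hz b, add_zero]
    refine Finset.sum_congr rfl fun i _ => Finset.sum_congr rfl fun k _ =>
      Finset.sum_congr rfl fun lam _ => Finset.sum_congr rfl fun j _ => ?_
    rw [hfunA i]
    simp only [Sum.elim_inl]

end Paper
end

section
/- If q_a[u,g] is a parameterized conservation law multiplier for F^a[u,g] and the parameterized conserved current J^μ[u,g], then F^a q_a + (∂J^μ/∂g_l)·∂_μ g_l = D_μ J^μ holds for every smooth u and every smooth (not necessarily constant) g; consequently the pair {q_a, ∂J^μ/∂g_l} is a conservation law multiplier for the extended system F^a[u,g] = 0, ∂_μ g_l = 0, with the same current J^μ[u,g]. -/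
namespace Paper

lemma pds_contDiffOn_aux {D : ℕ} {Ω : Set (Ed D)} (hΩ : IsOpen Ω)
    (l : List (Fin (D + 1))) (f : Ed D → ℝ) (hf : ContDiffOn ℝ (⊤ : ℕ∞) f Ω) :
    ContDiffOn ℝ (⊤ : ℕ∞) (pds l f) Ω := by
  induction l generalizing f with
  | nil => exact hf
  | cons μ l ih =>
    have h1 : ContDiffOn ℝ (⊤ : ℕ∞) (pds l f) Ω := ih f hf
    have h2 : ContDiffOn ℝ (⊤ : ℕ∞) (fun x => fderiv ℝ (pds l f) x) Ω :=
      h1.fderiv_of_isOpen hΩ (by exact_mod_cast le_top)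
    exact h2.clm_apply contDiffOn_const

lemma pd_realizeP_split {D N P m : ℕ} {Ω : Set (Ed D)} (hΩ : IsOpen Ω)
    (f : PJet (Fin N) (Fin P) m D → ℝ) (hf : ContDiff ℝ (⊤ : ℕ∞) f)
    (u : Fin N → Ed D → ℝ) (g : Fin P → Ed D → ℝ)
    (hu : SmoothFields Ω u) (hg : SmoothFields Ω g) (μ : Fin (D + 1))
    {x : Ed D} (hx : x ∈ Ω) :
    pd μ (realizeP m f u g) x =
      pd μ (fun y => f (y, jet m u y, fun l => g l x)) x +
        ∑ l, pd μ (g l) x * gpd f l (x, jet m u x, fun l => g l x) := by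
  classical
  set c : Fin P → ℝ := fun l => g l x with hc
  set p : PJet (Fin N) (Fin P) m D := (x, jet m u x, c) with hp
  -- derivative of the jet map
  have hjetc : ∀ cc : (Fin N) × MIdx m D, HasFDerivAt (fun y => jet m u y cc)
      (fderiv ℝ (fun y => jet m u y cc) x) x := by
    intro cc
    have : ContDiffOn ℝ (⊤ : ℕ∞) (pds (MIdx.toList cc.2) (u cc.1)) Ω :=
      pds_contDiffOn_aux hΩ _ _ (hu cc.1)
    have h := (this.contDiffAt (hΩ.mem_nhds hx)).differentiableAt (by simp)
    exact h.hasFDerivAt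
  set A : Ed D →L[ℝ] Jet (Fin N) m D :=
    ContinuousLinearMap.pi (fun cc => fderiv ℝ (fun y => jet m u y cc) x) with hA
  have hjet : HasFDerivAt (fun y => jet m u y) A x := hasFDerivAt_pi.2 hjetc
  -- derivative of the g-values map
  have hgc : ∀ l : Fin P, HasFDerivAt (g l) (fderiv ℝ (g l) x) x := by
    intro l
    exact (((hg l).contDiffAt (hΩ.mem_nhds hx)).differentiableAt (by simp)).hasFDerivAt
  set B : Ed D →L[ℝ] (Fin P → ℝ) :=
    ContinuousLinearMap.pi (fun l => fderiv ℝ (g l) x) with hB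
  have hgv : HasFDerivAt (fun y (l : Fin P) => g l y) B x := hasFDerivAt_pi.2 hgc
  -- the two base maps
  have hΦ : HasFDerivAt (fun y => ((y, jet m u y, fun l => g l y) : PJet (Fin N) (Fin P) m D))
      ((ContinuousLinearMap.id ℝ (Ed D)).prod (A.prod B)) x :=
    HasFDerivAt.prodMk (hasFDerivAt_id x) (HasFDerivAt.prodMk hjet hgv)
  have hΨ : HasFDerivAt (fun y => ((y, jet m u y, c) : PJet (Fin N) (Fin P) m D))
      ((ContinuousLinearMap.id ℝ (Ed D)).prod (A.prod 0)) x :=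
    HasFDerivAt.prodMk (hasFDerivAt_id x) (HasFDerivAt.prodMk hjet (hasFDerivAt_const c x))
  have hfd : HasFDerivAt f (fderiv ℝ f p) p :=
    ((hf.differentiable (by simp)) p).hasFDerivAt
  set DJ := fderiv ℝ f p with hDJ
  have hcomp1 : HasFDerivAt (realizeP m f u g)
      (DJ.comp ((ContinuousLinearMap.id ℝ (Ed D)).prod (A.prod B))) x := by
    have := hfd.comp x hΦ
    exact this
  have hcomp2 : HasFDerivAt (fun y => f (y, jet m u y, c))
      (DJ.comp ((ContinuousLinearMap.id ℝ (Ed D)).prod (A.prod 0))) x := by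
    have := hfd.comp x hΨ
    exact this
  set e : Ed D := Pi.single μ 1 with he
  have h1 : pd μ (realizeP m f u g) x = DJ (e, A e, B e) := by
    have := hcomp1.fderiv
    simp only [pd, this]
    rfl
  have h2 : pd μ (fun y => f (y, jet m u y, c)) x = DJ (e, A e, 0) := by
    have := hcomp2.fderiv
    simp only [pd, this]
    rfl
  have hsplit : ((e, A e, B e) : Ed D × Jet (Fin N) m D × (Fin P → ℝ)) =
      (e, A e, 0) + (0, 0, B e) := by
    simp [Prod.ext_iff]
  have hBe : (B e : Fin P → ℝ) = ∑ l, (pd μ (g l) x) • (Pi.single l 1 : Fin P → ℝ) := by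
    funext l'
    simp only [Finset.sum_apply, Pi.smul_apply, smul_eq_mul]
    rw [Finset.sum_eq_single l']
    · simp [pd, hB, e]
    · intro b _ hb; simp [Pi.single_apply, hb]
    · intro h; exact absurd (Finset.mem_univ l') h
  have h3 : DJ (0, 0, B e) = ∑ l, pd μ (g l) x * gpd f l p := by
    have : ((0, 0, B e) : Ed D × Jet (Fin N) m D × (Fin P → ℝ)) =
        ∑ l, (pd μ (g l) x) • ((0, 0, Pi.single l 1) :
          Ed D × Jet (Fin N) m D × (Fin P → ℝ)) := by
      rw [Prod.ext_iff]; constructor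
      · simp [Prod.fst_sum]
      · rw [Prod.ext_iff]; constructor
        · simp [Prod.fst_sum, Prod.snd_sum]
        · simp only [Prod.snd_sum, Prod.smul_snd]
          simpa using hBe
    rw [this, map_sum]
    congr 1
    funext l
    rw [map_smul]
    simp [gpd, hDJ, smul_eq_mul]
  rw [h1, h2, hsplit, map_add, h3]


/-- A parameterized multiplier q for F, J yields the multiplier
{q_a, ∂J^μ/∂g_l} of the extended system F = 0, ∂_μ g_l = 0, with the same current J. -/
theorem statement10 (D N P M m : ℕ) (Ω : Set (Ed D)) (hΩ : IsOpen Ω)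
    (F : Fin M → PJet (Fin N) (Fin P) m D → ℝ) (hF : ∀ a, ContDiff ℝ (⊤ : ℕ∞) (F a))
    (q : Fin M → PJet (Fin N) (Fin P) m D → ℝ) (hq : ∀ a, ContDiff ℝ (⊤ : ℕ∞) (q a))
    (J : Fin (D + 1) → PJet (Fin N) (Fin P) m D → ℝ) (hJ : ∀ μ, ContDiff ℝ (⊤ : ℕ∞) (J μ))
    (hpm : ParamMultiplier m Ω F q J) :
    ExtMultiplier m Ω F q (fun μ l => gpd (J μ) l) J := by
  classical
  intro u g hu hg x hx
  have key := fun μ => pd_realizeP_split hΩ (J μ) (hJ μ) u g hu hg μ hx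
  have hD : Dvg (fun μ => realizeP m (J μ) u g) x =
      Dvg (fun μ y => J μ (y, jet m u y, fun l => g l x)) x +
        ∑ μ, ∑ l, pd μ (g l) x * gpd (J μ) l (x, jet m u x, fun l => g l x) := by
    simp only [Dvg, key, Finset.sum_add_distrib]
  rw [hD, ← hpm u hu (fun l => g l x) x hx]
  rfl


end Paper
end

section
/- Let {q̃_a[u,g], θ^{μl}[u,g]} be a conservation law multiplier for the extended system F^a[u,g] = 0, ∂_μ g_l = 0 and for the current J̃^μ[u,g] (where q̃_a, θ^{μl}, J̃^μ may depend on derivatives of g_l). Then q_a(x,u,∂u,…,g) := q̃_a(x,u,∂u,…,g,0,0,…), obtained by setting all derivatives of g to zero, is a parameterized conservation law multiplier for F^a[u,g] and for the current J^μ(x,u,∂u,…,g) := J̃^μ(x,u,∂u,…,g,0,0,…). -/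
namespace Paper

lemma pd_const {D : ℕ} (μ : Fin (D + 1)) (r : ℝ) : pd μ (fun _ : Ed D => r) = fun _ => 0 := by
  funext x; simp [pd]

lemma pds_const_ne {D : ℕ} (l : List (Fin (D + 1))) (hl : l ≠ []) (r : ℝ) :
    pds l (fun _ : Ed D => r) = fun _ => 0 := by
  induction l with
  | nil => exact absurd rfl hl
  | cons μ t ih =>
    cases t with
    | nil => simpa [pds] using pd_const μ r
    | cons ν s =>
      show pd μ (pds (ν :: s) _) = _
      rw [ih (by simp)]
      exact pd_const μ 0

/-- Setting the derivatives of g to zero in a multiplier of the extended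
system yields a parameterized multiplier of F with the correspondingly truncated current. -/
theorem statement12 (D N P M m : ℕ) (Ω : Set (Ed D)) (hΩ : IsOpen Ω)
    (F : Fin M → PJet (Fin N) (Fin P) m D → ℝ) (hF : ∀ a, ContDiff ℝ (⊤ : ℕ∞) (F a))
    (qt : Fin M → Ed D × Jet (Fin N ⊕ Fin P) m D → ℝ)
    (hqt : ∀ a, ContDiff ℝ (⊤ : ℕ∞) (qt a))
    (θt : Fin (D + 1) → Fin P → Ed D × Jet (Fin N ⊕ Fin P) m D → ℝ)
    (hθt : ∀ μ l, ContDiff ℝ (⊤ : ℕ∞) (θt μ l))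
    (Jt : Fin (D + 1) → Ed D × Jet (Fin N ⊕ Fin P) m D → ℝ)
    (hJt : ∀ μ, ContDiff ℝ (⊤ : ℕ∞) (Jt μ))
    (hmult : ∀ u g, SmoothFields Ω u → SmoothFields Ω g → ∀ x ∈ Ω,
      ((∑ a, realizeP m (F a) u g x * realize m (qt a) (Sum.elim u g) x) +
        ∑ μ, ∑ l, pd μ (g l) x * realize m (θt μ l) (Sum.elim u g) x) =
      Dvg (fun μ => realize m (Jt μ) (Sum.elim u g)) x) :
    ParamMultiplier m Ω F (fun a => dropGDerivs (qt a)) (fun μ => dropGDerivs (Jt μ)) := by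
  intro u hu c x hx
  set g : Fin P → Ed D → ℝ := fun l _ => c l with hg
  have hgs : SmoothFields Ω g := fun l => contDiffOn_const
  have hjet : ∀ y : Ed D, (jet m (Sum.elim u g) y : Jet (Fin N ⊕ Fin P) m D) =
      fun w => match w with
        | (Sum.inl i, β) => jet m u y (i, β)
        | (Sum.inr l, β) => if (β.1 : ℕ) = 0 then c l else 0 := by
    intro y
    funext w
    obtain ⟨s, β⟩ := w
    cases s with
    | inl i => rfl
    | inr l =>
      show pds (MIdx.toList β) (fun _ => c l) y = _
      by_cases h : (β.1 : ℕ) = 0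
      · have hnil : MIdx.toList β = [] := by
          have : (MIdx.toList β).length = 0 := by
            simp [MIdx.toList, h]
          exact List.eq_nil_of_length_eq_zero this
        simp [hnil, pds, h]
      · have hne : MIdx.toList β ≠ [] := by
          intro hc
          apply h
          have := congrArg List.length hc
          simpa [MIdx.toList] using this
        rw [pds_const_ne _ hne]
        simp [h]
  have hreal : ∀ (f : Ed D × Jet (Fin N ⊕ Fin P) m D → ℝ) (y : Ed D),
      realize m f (Sum.elim u g) y = dropGDerivs f (y, jet m u y, c) := by
    intro f y
    show f (y, jet m (Sum.elim u g) y) = dropGDerivs f (y, jet m u y, c)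
    unfold dropGDerivs
    refine congrArg (fun z => f (y, z)) (funext fun w => ?_)
    obtain ⟨s, β⟩ := w
    rw [hjet y]
    cases s <;> rfl
  have h := hmult u g hu hgs x hx
  have hpd : ∀ (μ : Fin (D + 1)) (l : Fin P), pd μ (g l) x = 0 := by
    intro μ l
    have := congrFun (pd_const μ (c l)) x
    simpa [hg] using this
  simp only [hpd, zero_mul, Finset.sum_const_zero, add_zero] at h
  have hFa : ∀ a, realizeP m (F a) u g x = F a (x, jet m u x, c) := fun a => rfl
  calc (∑ a, F a (x, jet m u x, c) * dropGDerivs (qt a) (x, jet m u x, c))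
      = ∑ a, realizeP m (F a) u g x * realize m (qt a) (Sum.elim u g) x := by
        refine Finset.sum_congr rfl fun a _ => ?_
        rw [hFa a, hreal (qt a) x]
    _ = Dvg (fun μ => realize m (Jt μ) (Sum.elim u g)) x := h
    _ = Dvg (fun μ y => dropGDerivs (Jt μ) (y, jet m u y, c)) x := by
        congr 1
        funext μ y
        exact hreal (Jt μ) y


end Paper
end

section
/- Let {q_a[u,g], θ₁^{μl}[u,g]} and {q_a[u,g], θ₂^{μl}[u,g]}, where q_a, θ₁^{μl}, θ₂^{μl} do not depend on the derivatives of g_l, both be conservation law multipliers for the extended system F^a[u,g] = 0, ∂_μ g_l = 0, with currents J₁^μ[u,g] and J₂^μ[u,g] respectively, and suppose J₁^μ − J₂^μ is identically conserved. Then θ₁^{μl} = θ₂^{μl}. -/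
namespace Paper

section Aux

lemma pd_contDiffOn {D : ℕ} {Ω : Set (Ed D)} (hΩ : IsOpen Ω) {f : Ed D → ℝ}
    (hf : ContDiffOn ℝ (⊤ : ℕ∞) f Ω) (μ : Fin (D + 1)) :
    ContDiffOn ℝ (⊤ : ℕ∞) (pd μ f) Ω :=
  (hf.fderiv_of_isOpen hΩ (by exact_mod_cast le_top)).clm_apply contDiffOn_const

lemma pds_contDiffOn {D : ℕ} {Ω : Set (Ed D)} (hΩ : IsOpen Ω) {f : Ed D → ℝ}
    (hf : ContDiffOn ℝ (⊤ : ℕ∞) f Ω) (L : List (Fin (D + 1))) :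
    ContDiffOn ℝ (⊤ : ℕ∞) (pds L f) Ω := by
  induction L with
  | nil => exact hf
  | cons μ L ih => exact pd_contDiffOn hΩ ih μ

lemma realizeP_differentiableAt {D N P mm : ℕ} {Ω : Set (Ed D)} (hΩ : IsOpen Ω)
    {J : PJet (Fin N) (Fin P) mm D → ℝ} (hJ : ContDiff ℝ (⊤ : ℕ∞) J)
    {u : Fin N → Ed D → ℝ} (hu : SmoothFields Ω u)
    {g : Fin P → Ed D → ℝ} (hg : SmoothFields Ω g)
    {x : Ed D} (hx : x ∈ Ω) :
    DifferentiableAt ℝ (realizeP mm J u g) x := by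
  have hjet : DifferentiableAt ℝ (fun y => jet mm u y) x := by
    rw [differentiableAt_pi]
    intro c
    exact ((pds_contDiffOn hΩ (hu c.1) (MIdx.toList c.2)).differentiableOn
      (by simp)).differentiableAt (hΩ.mem_nhds hx)
  have hgv : DifferentiableAt ℝ (fun y => fun l => g l y) x := by
    rw [differentiableAt_pi]
    intro l
    exact ((hg l).differentiableOn (by simp)).differentiableAt (hΩ.mem_nhds hx)
  have hb : DifferentiableAt ℝ
      (fun y => ((y, jet mm u y, fun l => g l y) : PJet (Fin N) (Fin P) mm D)) x :=
    differentiableAt_id.prodMk (hjet.prodMk hgv)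
  exact ((hJ.differentiable (by simp)) _).comp x hb

lemma Dvg_sub {D : ℕ} {f h : Fin (D + 1) → Ed D → ℝ} {x : Ed D}
    (hf : ∀ μ, DifferentiableAt ℝ (f μ) x) (hh : ∀ μ, DifferentiableAt ℝ (h μ) x) :
    Dvg (fun μ y => f μ y - h μ y) x = Dvg f x - Dvg h x := by
  unfold Dvg pd
  rw [← Finset.sum_sub_distrib]
  refine Finset.sum_congr rfl fun μ _ => ?_
  rw [fderiv_fun_sub (hf μ) (hh μ)]
  rfl

end Aux

/-- Uniqueness of the θ^{μl} part of a multiplier of the extended system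
(for θ's not depending on the derivatives of g). -/
theorem statement13 (D N P M m : ℕ) (Ω : Set (Ed D)) (hΩ : IsOpen Ω)
    (F : Fin M → PJet (Fin N) (Fin P) m D → ℝ) (hF : ∀ a, ContDiff ℝ (⊤ : ℕ∞) (F a))
    (q : Fin M → PJet (Fin N) (Fin P) m D → ℝ) (hq : ∀ a, ContDiff ℝ (⊤ : ℕ∞) (q a))
    (θ₁ θ₂ : Fin (D + 1) → Fin P → PJet (Fin N) (Fin P) m D → ℝ)
    (hθ₁ : ∀ μ l, ContDiff ℝ (⊤ : ℕ∞) (θ₁ μ l)) (hθ₂ : ∀ μ l, ContDiff ℝ (⊤ : ℕ∞) (θ₂ μ l))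
    (J₁ J₂ : Fin (D + 1) → PJet (Fin N) (Fin P) m D → ℝ)
    (hJ₁ : ∀ μ, ContDiff ℝ (⊤ : ℕ∞) (J₁ μ)) (hJ₂ : ∀ μ, ContDiff ℝ (⊤ : ℕ∞) (J₂ μ))
    (hm₁ : ExtMultiplier m Ω F q θ₁ J₁) (hm₂ : ExtMultiplier m Ω F q θ₂ J₂)
    (hJ : ∀ u g, SmoothFields Ω u → SmoothFields Ω g → ∀ x ∈ Ω,
      Dvg (fun μ y => realizeP m (J₁ μ) u g y - realizeP m (J₂ μ) u g y) x = 0) :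
    ∀ u g, SmoothFields Ω u → SmoothFields Ω g → ∀ μ l, ∀ x ∈ Ω,
      realizeP m (θ₁ μ l) u g x = realizeP m (θ₂ μ l) u g x := by
  intro u g hu hg μ₀ l₀ x₀ hx₀
  -- the affine test field with prescribed value and first derivatives at x₀
  set g' : Fin P → Ed D → ℝ :=
    fun l y => g l x₀ + (if l = l₀ then (1 : ℝ) else 0) * (y μ₀ - x₀ μ₀) with hg'def
  have hgs : SmoothFields Ω g' := by
    intro l
    apply ContDiff.contDiffOn
    exact contDiff_const.add (contDiff_const.mul
      (((ContinuousLinearMap.proj μ₀ : Ed D →L[ℝ] ℝ).contDiff).sub contDiff_const))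
  have hpd : ∀ l μ (x : Ed D), pd μ (g' l) x =
      (if l = l₀ then (1 : ℝ) else 0) * (if μ₀ = μ then (1 : ℝ) else 0) := by
    intro l μ x
    have h0 : HasFDerivAt (fun y : Ed D => y μ₀)
        (ContinuousLinearMap.proj μ₀ : Ed D →L[ℝ] ℝ) x :=
      (ContinuousLinearMap.proj μ₀ : Ed D →L[ℝ] ℝ).hasFDerivAt
    have hline : HasFDerivAt (g' l)
        ((if l = l₀ then (1 : ℝ) else 0) • (ContinuousLinearMap.proj μ₀ : Ed D →L[ℝ] ℝ)) x :=
      ((h0.sub_const (x₀ μ₀)).const_mul _).const_add _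
    unfold pd
    rw [hline.fderiv]
    split_ifs <;> simp [Pi.single_apply] <;> assumption
  have hsum : ∀ θ : Fin (D + 1) → Fin P → PJet (Fin N) (Fin P) m D → ℝ,
      (∑ μ, ∑ l, pd μ (g' l) x₀ * realizeP m (θ μ l) u g' x₀)
        = realizeP m (θ μ₀ l₀) u g' x₀ := by
    intro θ
    rw [Finset.sum_eq_single μ₀]
    · rw [Finset.sum_eq_single l₀]
      · rw [hpd]; simp
      · intro l _ hl; rw [hpd]; simp [hl]
      · simp
    · intro μ _ hμ
      apply Finset.sum_eq_zero
      intro l _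
      rw [hpd]; simp [Ne.symm hμ]
    · simp
  have h1 := hm₁ u g' hu hgs x₀ hx₀
  have h2 := hm₂ u g' hu hgs x₀ hx₀
  rw [hsum θ₁] at h1
  rw [hsum θ₂] at h2
  have hdiff₁ : ∀ μ, DifferentiableAt ℝ (realizeP m (J₁ μ) u g') x₀ :=
    fun μ => realizeP_differentiableAt hΩ (hJ₁ μ) hu hgs hx₀
  have hdiff₂ : ∀ μ, DifferentiableAt ℝ (realizeP m (J₂ μ) u g') x₀ :=
    fun μ => realizeP_differentiableAt hΩ (hJ₂ μ) hu hgs hx₀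
  have key : Dvg (fun μ => realizeP m (J₁ μ) u g') x₀
      - Dvg (fun μ => realizeP m (J₂ μ) u g') x₀ = 0 := by
    rw [← Dvg_sub hdiff₁ hdiff₂]
    exact hJ u g' hu hgs x₀ hx₀
  have hθ : realizeP m (θ₁ μ₀ l₀) u g' x₀ = realizeP m (θ₂ μ₀ l₀) u g' x₀ := by
    linarith [h1, h2, key]
  have hgx : (fun l => g' l x₀) = fun l => g l x₀ := by
    funext l; simp [hg'def]
  have hre : ∀ f : PJet (Fin N) (Fin P) m D → ℝ,
      realizeP m f u g x₀ = realizeP m f u g' x₀ := by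
    intro f; unfold realizeP; rw [hgx]
  rw [hre (θ₁ μ₀ l₀), hre (θ₂ μ₀ l₀)]
  exact hθ

end Paper
end

section
/- Let q_a[u,g] be a parameterized conservation law multiplier for F^a[u,g] and the current J^μ[u,g], let ω be a real constant, and let {δu_i, δg_l} be a characteristic. If (i) δ(F^a q_a) = ω F^a q_a holds for every smooth u and every smooth (not necessarily constant) g, and (ii) D_μ δg_l = 0 whenever g is constant, then δJ^μ − ωJ^μ is conserved for every smooth u and every constant g, i.e. D_μ(δJ^μ − ωJ^μ) = 0 for arbitrary u and constant g. -/
namespace Paper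

section Helpers15

variable {D : ℕ}

theorem infty_add_one_le : ((⊤:ℕ∞) : WithTop ℕ∞) + 1 ≤ ((⊤:ℕ∞) : WithTop ℕ∞) := by
  simp

theorem contDiffAt_pd {Ω : Set (Ed D)} (hΩ : IsOpen Ω) {f : Ed D → ℝ}
    (hf : ContDiffOn ℝ (⊤:ℕ∞) f Ω) (μ : Fin (D+1)) {x : Ed D} (hx : x ∈ Ω) :
    ContDiffAt ℝ (⊤:ℕ∞) (pd μ f) x := by
  have h1 : ContDiffAt ℝ (⊤:ℕ∞) f x := hf.contDiffAt (hΩ.mem_nhds hx)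
  have h2 : ContDiffAt ℝ (⊤:ℕ∞) (fderiv ℝ f) x := h1.fderiv_right infty_add_one_le
  exact h2.clm_apply contDiffAt_const

theorem contDiffOn_pd {Ω : Set (Ed D)} (hΩ : IsOpen Ω) {f : Ed D → ℝ}
    (hf : ContDiffOn ℝ (⊤:ℕ∞) f Ω) (μ : Fin (D+1)) :
    ContDiffOn ℝ (⊤:ℕ∞) (pd μ f) Ω :=
  fun x hx => (contDiffAt_pd hΩ hf μ hx).contDiffWithinAt

theorem contDiffOn_pds {Ω : Set (Ed D)} (hΩ : IsOpen Ω) (L : List (Fin (D+1)))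
    {f : Ed D → ℝ} (hf : ContDiffOn ℝ (⊤:ℕ∞) f Ω) :
    ContDiffOn ℝ (⊤:ℕ∞) (pds L f) Ω := by
  induction L with
  | nil => exact hf
  | cons μ L ih => exact contDiffOn_pd hΩ ih μ

theorem pds_congr {Ω : Set (Ed D)} (hΩ : IsOpen Ω) (L : List (Fin (D+1)))
    {f g : Ed D → ℝ} (h : ∀ y ∈ Ω, f y = g y) :
    ∀ y ∈ Ω, pds L f y = pds L g y := by
  induction L with
  | nil => exact h
  | cons μ L ih =>
    intro y hy
    have : pds L f =ᶠ[nhds y] pds L g :=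
      Filter.eventuallyEq_of_mem (hΩ.mem_nhds hy) (fun z hz => ih z hz)
    simp only [pds, pd, this.fderiv_eq]

theorem pds_add_smul {Ω : Set (Ed D)} (hΩ : IsOpen Ω) (L : List (Fin (D+1)))
    {f g : Ed D → ℝ} (hf : ContDiffOn ℝ (⊤:ℕ∞) f Ω) (hg : ContDiffOn ℝ (⊤:ℕ∞) g Ω)
    (t : ℝ) : ∀ y ∈ Ω, pds L (fun z => f z + t * g z) y = pds L f y + t * pds L g y := by
  induction L with
  | nil => intro y _; rfl
  | cons μ L ih =>
    intro y hy
    have h1 : pds (μ :: L) (fun z => f z + t * g z) y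
        = pd μ (fun z => pds L f z + t * pds L g z) y := by
      show pd μ (pds L fun z => f z + t * g z) y = _
      unfold pd
      congr 1
      refine Filter.EventuallyEq.fderiv_eq ?_
      exact Filter.eventuallyEq_of_mem (hΩ.mem_nhds hy) (fun z hz => ih z hz)
    rw [h1]
    have hdf : DifferentiableAt ℝ (pds L f) y :=
      ((contDiffOn_pds hΩ L hf).contDiffAt (hΩ.mem_nhds hy)).differentiableAt
        (by simp)
    have hdg : DifferentiableAt ℝ (pds L g) y :=
      ((contDiffOn_pds hΩ L hg).contDiffAt (hΩ.mem_nhds hy)).differentiableAt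
        (by simp)
    have := (hdf.hasFDerivAt.add ((hdg.hasFDerivAt).const_mul t)).fderiv
    show fderiv ℝ (fun z => pds L f z + t * pds L g z) y (Pi.single μ 1) = _
    rw [show (fun z => pds L f z + t * pds L g z) = (pds L f + fun y => t * pds L g y) from rfl, this]
    simp [pds, pd]

theorem jet_add_smul {ι : Type} {Ω : Set (Ed D)} (hΩ : IsOpen Ω) {m : ℕ}
    {U V : ι → Ed D → ℝ} (hU : ∀ w, ContDiffOn ℝ (⊤:ℕ∞) (U w) Ω)
    (hV : ∀ w, ContDiffOn ℝ (⊤:ℕ∞) (V w) Ω) (t : ℝ) :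
    ∀ y ∈ Ω, jet m (fun w z => U w z + t * V w z) y = jet m U y + t • jet m V y := by
  intro y hy
  funext c
  exact pds_add_smul hΩ _ (hU c.1) (hV c.1) t y hy

theorem contDiffOn_jet {ι : Type} [Fintype ι] [DecidableEq ι] {Ω : Set (Ed D)} (hΩ : IsOpen Ω) {m : ℕ}
    {U : ι → Ed D → ℝ} (hU : ∀ w, ContDiffOn ℝ (⊤:ℕ∞) (U w) Ω) :
    ContDiffOn ℝ (⊤:ℕ∞) (jet m U) Ω := by
  rw [contDiffOn_pi]
  exact fun c => contDiffOn_pds hΩ _ (hU c.1)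

theorem contDiff_liftP {ι γ : Type} [Fintype ι] [DecidableEq ι] [Fintype γ] [DecidableEq γ] {m : ℕ} {f : PJet ι γ m D → ℝ}
    (hf : ContDiff ℝ (⊤:ℕ∞) f) : ContDiff ℝ (⊤:ℕ∞) (liftP f) := by
  apply hf.comp
  refine ContDiff.prodMk contDiff_fst (ContDiff.prodMk ?_ ?_)
  · rw [contDiff_pi]
    exact fun c => (contDiff_pi.1 contDiff_id _).comp contDiff_snd
  · rw [contDiff_pi]
    exact fun l => (contDiff_pi.1 contDiff_id _).comp contDiff_snd

theorem jet_apply_sum {ι : Type} [Fintype ι] [DecidableEq ι] {m : ℕ}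
    (B : Jet ι m D) :
    ((0 : Ed D), B) = ∑ c : ι × MIdx m D, B c • (((0 : Ed D), Pi.single c 1) : Ed D × Jet ι m D) := by
  have hB : B = ∑ c : ι × MIdx m D, B c • (Pi.single c (1:ℝ) : Jet ι m D) := by
    have h1 : ∀ c : ι × MIdx m D, B c • (Pi.single c (1:ℝ) : Jet ι m D)
        = (Pi.single c (B c) : Jet ι m D) := by
      intro c
      rw [← Pi.single_smul]
      simp
    simp only [h1]
    exact (Finset.univ_sum_single B).symm
  refine Prod.ext ?_ ?_
  · rw [Prod.fst_sum]; simp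
  · rw [Prod.snd_sum]; simpa using hB

theorem fderiv_apply_jet {ι : Type} [Fintype ι] [DecidableEq ι] {m : ℕ}
    {f : Ed D × Jet ι m D → ℝ} {p : Ed D × Jet ι m D} (hf : DifferentiableAt ℝ f p)
    (B : Jet ι m D) :
    fderiv ℝ f p ((0 : Ed D), B) = ∑ c : ι × MIdx m D, jpd f c p * B c := by
  rw [jet_apply_sum B, map_sum]
  refine Finset.sum_congr rfl fun c _ => ?_
  rw [ContinuousLinearMap.map_smul]
  simp [jpd, mul_comm]

theorem clm_zero_of_pd_zero {g : Ed D → ℝ} {x : Ed D}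
    (hg : DifferentiableAt ℝ g x) (h : ∀ μ, fderiv ℝ g x (Pi.single μ 1) = 0) :
    fderiv ℝ g x = 0 := by
  ext v
  have hv : v = ∑ μ : Fin (D+1), v μ • (Pi.single μ 1 : Ed D) := by
    have h1 : ∀ μ : Fin (D+1), v μ • (Pi.single μ (1:ℝ) : Ed D)
        = (Pi.single μ (v μ) : Ed D) := by
      intro μ
      rw [← Pi.single_smul]
      simp
    simp only [h1]
    exact (Finset.univ_sum_single v).symm
  rw [ContinuousLinearMap.zero_apply, hv, map_sum]
  simp [h]

theorem hasDerivAt_line {ι : Type} [Fintype ι] [DecidableEq ι] {m : ℕ} {f : Ed D × Jet ι m D → ℝ}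
    (hf : ContDiff ℝ (⊤:ℕ∞) f) (y : Ed D) (A B : Jet ι m D) (t₀ : ℝ) :
    HasDerivAt (fun t => f (y, A + t • B)) (fderiv ℝ f (y, A + t₀ • B) ((0:Ed D), B)) t₀ := by
  have hin : HasDerivAt (fun t : ℝ => ((y, A + t • B) : Ed D × Jet ι m D))
      (((0:Ed D), B) : Ed D × Jet ι m D) t₀ := by
    refine (hasDerivAt_const t₀ y).prodMk ?_
    have := ((hasDerivAt_id t₀).smul_const B).const_add A
    simpa using this
  exact (hf.differentiable (by simp) (y, A + t₀ • B)).hasFDerivAt.comp_hasDerivAt t₀ hin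

theorem liftP_jet_eq {ι γ : Type} {m : ℕ} (f : PJet ι γ m D → ℝ)
    (W : (ι ⊕ γ) → Ed D → ℝ) (y : Ed D) :
    liftP f (y, jet m W y)
      = f (y, jet m (fun i => W (Sum.inl i)) y, fun l => W (Sum.inr l) y) := by
  show f _ = _
  congr 1

theorem pd_congr_nhds {f g : Ed D → ℝ} {x : Ed D} (h : f =ᶠ[nhds x] g) (μ : Fin (D+1)) :
    pd μ f x = pd μ g x := by
  unfold pd
  rw [h.fderiv_eq]

theorem pd_sub_const_mul {f1 f2 : Ed D → ℝ} {x : Ed D} (h1 : DifferentiableAt ℝ f1 x)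
    (h2 : DifferentiableAt ℝ f2 x) (ω : ℝ) (μ : Fin (D+1)) :
    pd μ (fun y => f1 y - ω * f2 y) x = pd μ f1 x - ω * pd μ f2 x := by
  show fderiv ℝ _ x _ = _
  rw [fderiv_fun_sub h1 (h2.const_mul ω), fderiv_const_mul h2 ω]
  simp [pd]

theorem slice_hasDerivAt {Φ : ℝ × Ed D → ℝ} {t : ℝ} {y : Ed D}
    (h : DifferentiableAt ℝ Φ (t, y)) :
    HasDerivAt (fun s => Φ (s, y)) (fderiv ℝ Φ (t, y) (1, 0)) t :=
  h.hasFDerivAt.comp_hasDerivAt t ((hasDerivAt_id t).prodMk (hasDerivAt_const t y))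

theorem slice_pd {Φ : ℝ × Ed D → ℝ} {t : ℝ} {y : Ed D}
    (h : DifferentiableAt ℝ Φ (t, y)) (ν : Fin (D + 1)) :
    pd ν (fun z => Φ (t, z)) y = fderiv ℝ Φ (t, y) ((0 : ℝ), Pi.single ν 1) := by
  have hin : HasFDerivAt (fun z : Ed D => ((t, z) : ℝ × Ed D))
      ((0 : Ed D →L[ℝ] ℝ).prod (ContinuousLinearMap.id ℝ (Ed D))) y :=
    (hasFDerivAt_const t y).prodMk (hasFDerivAt_id y)
  have h2 : HasFDerivAt (fun z => Φ (t, z))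
      ((fderiv ℝ Φ (t, y)).comp ((0 : Ed D →L[ℝ] ℝ).prod (ContinuousLinearMap.id ℝ (Ed D)))) y :=
    h.hasFDerivAt.comp y hin
  show fderiv ℝ (fun z => Φ (t, z)) y (Pi.single ν 1) = _
  rw [h2.fderiv]
  simp

theorem snd_pd {Φ : ℝ × Ed D → ℝ} {t : ℝ} {x : Ed D}
    (h2 : DifferentiableAt ℝ (fderiv ℝ Φ) (t, x)) (v : ℝ × Ed D) (ν : Fin (D + 1)) :
    pd ν (fun y => fderiv ℝ Φ (t, y) v) x
      = fderiv ℝ (fderiv ℝ Φ) (t, x) ((0 : ℝ), Pi.single ν 1) v := by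
  have hout := h2.hasFDerivAt.clm_apply (hasFDerivAt_const v (t, x))
  have hin : HasFDerivAt (fun z : Ed D => ((t, z) : ℝ × Ed D))
      ((0 : Ed D →L[ℝ] ℝ).prod (ContinuousLinearMap.id ℝ (Ed D))) x :=
    (hasFDerivAt_const t x).prodMk (hasFDerivAt_id x)
  have h3 : HasFDerivAt (fun z : Ed D => fderiv ℝ Φ (t, z) v)
      (((fderiv ℝ Φ (t, x)).comp (0 : (ℝ × Ed D) →L[ℝ] (ℝ × Ed D))
        + (fderiv ℝ (fderiv ℝ Φ) (t, x)).flip v).comp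
        ((0 : Ed D →L[ℝ] ℝ).prod (ContinuousLinearMap.id ℝ (Ed D)))) x :=
    hout.comp x hin
  show fderiv ℝ (fun z : Ed D => fderiv ℝ Φ (t, z) v) x (Pi.single ν 1) = _
  rw [h3.fderiv]
  simp

theorem snd_pd_diff {Φ : ℝ × Ed D → ℝ} {t : ℝ} {x : Ed D}
    (h2 : DifferentiableAt ℝ (fderiv ℝ Φ) (t, x)) (v : ℝ × Ed D) :
    DifferentiableAt ℝ (fun y => fderiv ℝ Φ (t, y) v) x := by
  have hout := h2.hasFDerivAt.clm_apply (hasFDerivAt_const v (t, x))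
  have hin : HasFDerivAt (fun z : Ed D => ((t, z) : ℝ × Ed D))
      ((0 : Ed D →L[ℝ] ℝ).prod (ContinuousLinearMap.id ℝ (Ed D))) x :=
    (hasFDerivAt_const t x).prodMk (hasFDerivAt_id x)
  exact (hout.comp x hin).differentiableAt

theorem snd_t {Φ : ℝ × Ed D → ℝ} {x : Ed D}
    (h2 : DifferentiableAt ℝ (fderiv ℝ Φ) (0, x)) (v : ℝ × Ed D) :
    HasDerivAt (fun t => fderiv ℝ Φ (t, x) v)
      (fderiv ℝ (fderiv ℝ Φ) (0, x) ((1 : ℝ), (0 : Ed D)) v) 0 := by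
  have hout := h2.hasFDerivAt.clm_apply (hasFDerivAt_const v ((0:ℝ), x))
  have h3 := hout.comp_hasDerivAt 0 ((hasDerivAt_id (0:ℝ)).prodMk (hasDerivAt_const (0:ℝ) x))
  exact h3.congr_deriv (by simp)

end Helpers15

/-- If δ(F^aq_a) = ωF^aq_a for arbitrary u, g and D_μδg_l = 0 for
constant g, then δJ^μ − ωJ^μ is conserved for arbitrary u and constant g. -/
theorem statement15 (D N P M m : ℕ) (Ω : Set (Ed D)) (hΩ : IsOpen Ω)
    (F : Fin M → PJet (Fin N) (Fin P) m D → ℝ) (hF : ∀ a, ContDiff ℝ (⊤ : ℕ∞) (F a))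
    (q : Fin M → PJet (Fin N) (Fin P) m D → ℝ) (hq : ∀ a, ContDiff ℝ (⊤ : ℕ∞) (q a))
    (J : Fin (D + 1) → PJet (Fin N) (Fin P) m D → ℝ) (hJ : ∀ μ, ContDiff ℝ (⊤ : ℕ∞) (J μ))
    (ω : ℝ)
    (δu : Fin N → Ed D × Jet (Fin N ⊕ Fin P) m D → ℝ)
    (hδu : ∀ i, ContDiff ℝ (⊤ : ℕ∞) (δu i))
    (δg : Fin P → Ed D × Jet (Fin N ⊕ Fin P) m D → ℝ)
    (hδg : ∀ l, ContDiff ℝ (⊤ : ℕ∞) (δg l))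
    (hpm : ParamMultiplier m Ω F q J)
    -- (i) δ(F^a q_a) = ω F^a q_a for every smooth u and g:
    (hi : ∀ u g, SmoothFields Ω u → SmoothFields Ω g → ∀ x ∈ Ω,
      variation m (fun p => ∑ a, liftP (F a) p * liftP (q a) p) (Sum.elim u g)
        (Sum.elim (fun i => realize m (δu i) (Sum.elim u g))
          (fun l => realize m (δg l) (Sum.elim u g))) x
        = ω * ∑ a, realizeP m (F a) u g x * realizeP m (q a) u g x)
    -- (ii) D_μ δg_l = 0 for constant g:
    (hii : ∀ u, SmoothFields Ω u → ∀ c : Fin P → ℝ, ∀ l μ, ∀ x ∈ Ω,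
      pd μ (realize m (δg l) (Sum.elim u (fun l' _ => c l'))) x = 0) :
    ∀ u, SmoothFields Ω u → ∀ c : Fin P → ℝ, ∀ x ∈ Ω,
      Dvg (fun μ y =>
        variation m (liftP (J μ)) (Sum.elim u (fun l _ => c l))
          (Sum.elim (fun i => realize m (δu i) (Sum.elim u (fun l _ => c l)))
            (fun l => realize m (δg l) (Sum.elim u (fun l' _ => c l')))) y
        - ω * realizeP m (J μ) u (fun l _ => c l) y) x = 0 := by
  intro u hu c x hx
  have hΩx : Ω ∈ nhds x := hΩ.mem_nhds hx
  have hle : ((⊤:ℕ∞) : WithTop ℕ∞) ≠ 0 := by simp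
  set G : Fin P → Ed D → ℝ := fun l _ => c l with hGdef
  set U : (Fin N ⊕ Fin P) → Ed D → ℝ := Sum.elim u G with hUdef
  set V : (Fin N ⊕ Fin P) → Ed D → ℝ :=
    Sum.elim (fun i => realize m (δu i) U) (fun l => realize m (δg l) U) with hVdef
  have hGs : SmoothFields Ω G := fun _ => contDiffOn_const
  have hUs : ∀ w, ContDiffOn ℝ (⊤:ℕ∞) (U w) Ω := by
    rintro (i | l)
    · exact hu i
    · exact contDiffOn_const
  have hjetU : ContDiffOn ℝ (⊤:ℕ∞) (jet m U) Ω := contDiffOn_jet hΩ hUs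
  have hVs : ∀ w, ContDiffOn ℝ (⊤:ℕ∞) (V w) Ω := by
    rintro (i | l)
    · exact (hδu i).comp_contDiffOn (contDiffOn_id.prodMk hjetU)
    · exact (hδg l).comp_contDiffOn (contDiffOn_id.prodMk hjetU)
  have hjetV : ContDiffOn ℝ (⊤:ℕ∞) (jet m V) Ω := contDiffOn_jet hΩ hVs
  -- deformed configurations
  set NU : ℝ → (Fin N ⊕ Fin P) → Ed D → ℝ := fun t w z => U w z + t * V w z with hNUdef
  have hNUs : ∀ (t : ℝ) w, ContDiffOn ℝ (⊤:ℕ∞) (NU t w) Ω :=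
    fun t w => (hUs w).add (contDiffOn_const.mul (hVs w))
  have hjetNU : ∀ (t : ℝ), ∀ y ∈ Ω, jet m (NU t) y = jet m U y + t • jet m V y :=
    fun t => jet_add_smul hΩ hUs hVs t
  set ct : ℝ → Fin P → ℝ := fun t l => c l + t * V (Sum.inr l) x with hctdef
  have e12 : ∀ t : ℝ, (fun l => NU t (Sum.inr l) x) = ct t := fun t => funext fun l => rfl
  -- the two-variable functions
  set Φ : Fin (D+1) → ℝ × Ed D → ℝ :=
    fun μ p => liftP (J μ) (p.2, jet m U p.2 + p.1 • jet m V p.2) with hΦdef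
  have hS : IsOpen ((Set.univ : Set ℝ) ×ˢ Ω) := isOpen_univ.prod hΩ
  have hΦat : ∀ μ (t : ℝ), ∀ y ∈ Ω, ContDiffAt ℝ (⊤:ℕ∞) (Φ μ) (t, y) := by
    intro μ t y hy
    have h1 : ContDiffOn ℝ (⊤:ℕ∞) (Φ μ) (Set.univ ×ˢ Ω) := by
      apply (contDiff_liftP (hJ μ)).comp_contDiffOn
      refine ContDiffOn.prodMk contDiff_snd.contDiffOn
        (ContDiffOn.add ?_ (ContDiffOn.smul contDiff_fst.contDiffOn ?_))
      · exact hjetU.comp contDiff_snd.contDiffOn (fun p hp => hp.2)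
      · exact hjetV.comp contDiff_snd.contDiffOn (fun p hp => hp.2)
    exact h1.contDiffAt (hS.mem_nhds ⟨trivial, hy⟩)
  have hΦd : ∀ μ (t : ℝ), ∀ y ∈ Ω, DifferentiableAt ℝ (Φ μ) (t, y) :=
    fun μ t y hy => (hΦat μ t y hy).differentiableAt hle
  have hΦ2 : ∀ μ, DifferentiableAt ℝ (fderiv ℝ (Φ μ)) ((0:ℝ), x) :=
    fun μ => ((hΦat μ 0 x hx).fderiv_right infty_add_one_le).differentiableAt hle
  have hsymm : ∀ μ, IsSymmSndFDerivAt ℝ (Φ μ) ((0:ℝ), x) :=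
    fun μ => (hΦat μ 0 x hx).isSymmSndFDerivAt (by rw [minSmoothness_of_isRCLikeNormedField]; exact WithTop.coe_le_coe.2 (le_top : (2:ℕ∞) ≤ ⊤))
  -- the auxiliary product function and ψ
  set Pf : Ed D × Jet (Fin N ⊕ Fin P) m D → ℝ :=
    fun p => ∑ a, liftP (F a) p * liftP (q a) p with hPfdef
  have hPf : ContDiff ℝ (⊤:ℕ∞) Pf :=
    ContDiff.sum fun a _ => (contDiff_liftP (hF a)).mul (contDiff_liftP (hq a))
  set ψ : ℝ → ℝ := fun t => Pf (x, jet m U x + t • jet m V x) with hψdef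
  -- key : freezing the parameter slot
  have key : ∀ (t : ℝ) μ, fderiv ℝ (Φ μ) (t, x) ((0:ℝ), Pi.single μ 1)
      = pd μ (fun y => J μ (y, jet m (fun i => NU t (Sum.inl i)) y, ct t)) x := by
    intro t μ
    rw [← slice_pd (hΦd μ t x hx) μ]
    have hev : (fun z => Φ μ (t, z)) =ᶠ[nhds x]
        (fun z => J μ (z, jet m (fun i => NU t (Sum.inl i)) z,
          fun l => NU t (Sum.inr l) z)) := by
      refine Filter.eventuallyEq_of_mem hΩx fun z hz => ?_
      show liftP (J μ) (z, jet m U z + t • jet m V z) = _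
      rw [← hjetNU t z hz, liftP_jet_eq]
    rw [pd_congr_nhds hev μ]
    have hjd : DifferentiableAt ℝ (jet m (fun i => NU t (Sum.inl i))) x :=
      ((contDiffOn_jet hΩ (fun i => hNUs t (Sum.inl i))).contDiffAt hΩx).differentiableAt hle
    have hgd : ∀ l, DifferentiableAt ℝ (NU t (Sum.inr l)) x :=
      fun l => ((hNUs t (Sum.inr l)).contDiffAt hΩx).differentiableAt hle
    have hVd : ∀ l, DifferentiableAt ℝ (V (Sum.inr l)) x :=
      fun l => ((hVs (Sum.inr l)).contDiffAt hΩx).differentiableAt hle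
    have hg0 : ∀ l, fderiv ℝ (NU t (Sum.inr l)) x = 0 := by
      intro l
      apply clm_zero_of_pd_zero (hgd l)
      intro ν
      have h2 : fderiv ℝ (V (Sum.inr l)) x (Pi.single ν 1) = 0 := by
        have h3 := hii u hu c l ν x hx
        rw [← hGdef, ← hUdef] at h3
        exact h3
      show fderiv ℝ (fun z => c l + t * V (Sum.inr l) z) x (Pi.single ν 1) = 0
      rw [fderiv_const_add, fderiv_const_mul (hVd l) t]
      simp [h2]
    have hγ1 : HasFDerivAt
        (fun z => ((z, jet m (fun i => NU t (Sum.inl i)) z, fun l => NU t (Sum.inr l) z) :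
          PJet (Fin N) (Fin P) m D))
        ((ContinuousLinearMap.id ℝ (Ed D)).prod
          ((fderiv ℝ (jet m (fun i => NU t (Sum.inl i))) x).prod
            (ContinuousLinearMap.pi fun _ => (0 : Ed D →L[ℝ] ℝ)))) x := by
      refine (hasFDerivAt_id x).prodMk (hjd.hasFDerivAt.prodMk ?_)
      apply hasFDerivAt_pi.2
      intro l
      have h4 := (hgd l).hasFDerivAt
      rwa [hg0 l] at h4
    have hγ2 : HasFDerivAt
        (fun z => ((z, jet m (fun i => NU t (Sum.inl i)) z, ct t) :
          PJet (Fin N) (Fin P) m D))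
        ((ContinuousLinearMap.id ℝ (Ed D)).prod
          ((fderiv ℝ (jet m (fun i => NU t (Sum.inl i))) x).prod
            (ContinuousLinearMap.pi fun _ => (0 : Ed D →L[ℝ] ℝ)))) x := by
      refine (hasFDerivAt_id x).prodMk (hjd.hasFDerivAt.prodMk ?_)
      apply hasFDerivAt_pi.2
      intro l
      exact hasFDerivAt_const (ct t l) x
    have hJx : DifferentiableAt ℝ (J μ)
        ((x, jet m (fun i => NU t (Sum.inl i)) x, fun l => NU t (Sum.inr l) x) :
          PJet (Fin N) (Fin P) m D) :=
      ((hJ μ).differentiable hle) _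
    have hJx' : DifferentiableAt ℝ (J μ)
        ((x, jet m (fun i => NU t (Sum.inl i)) x, ct t) : PJet (Fin N) (Fin P) m D) := by
      rw [← e12 t]; exact hJx
    have hcomp1 : HasFDerivAt
        (fun z => J μ (z, jet m (fun i => NU t (Sum.inl i)) z, fun l => NU t (Sum.inr l) z))
        ((fderiv ℝ (J μ)
          ((x, jet m (fun i => NU t (Sum.inl i)) x, fun l => NU t (Sum.inr l) x) :
            PJet (Fin N) (Fin P) m D)).comp
          ((ContinuousLinearMap.id ℝ (Ed D)).prod
            ((fderiv ℝ (jet m (fun i => NU t (Sum.inl i))) x).prod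
              (ContinuousLinearMap.pi fun _ => (0 : Ed D →L[ℝ] ℝ))))) x :=
      hJx.hasFDerivAt.comp x hγ1
    have hcomp2 : HasFDerivAt
        (fun z => J μ (z, jet m (fun i => NU t (Sum.inl i)) z, ct t))
        ((fderiv ℝ (J μ)
          ((x, jet m (fun i => NU t (Sum.inl i)) x, ct t) :
            PJet (Fin N) (Fin P) m D)).comp
          ((ContinuousLinearMap.id ℝ (Ed D)).prod
            ((fderiv ℝ (jet m (fun i => NU t (Sum.inl i))) x).prod
              (ContinuousLinearMap.pi fun _ => (0 : Ed D →L[ℝ] ℝ))))) x :=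
      hJx'.hasFDerivAt.comp x hγ2
    show fderiv ℝ _ x (Pi.single μ 1) = fderiv ℝ _ x (Pi.single μ 1)
    rw [hcomp1.fderiv, hcomp2.fderiv, e12 t]
  -- φ = ψ
  have hφψ : ∀ t : ℝ, (∑ μ, fderiv ℝ (Φ μ) (t, x) ((0:ℝ), Pi.single μ 1)) = ψ t := by
    intro t
    have hsm : SmoothFields Ω (fun i => NU t (Sum.inl i)) := fun i => hNUs t (Sum.inl i)
    have hD := hpm (fun i => NU t (Sum.inl i)) hsm (ct t) x hx
    calc (∑ μ, fderiv ℝ (Φ μ) (t, x) ((0:ℝ), Pi.single μ 1))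
        = ∑ μ, pd μ (fun y => J μ (y, jet m (fun i => NU t (Sum.inl i)) y, ct t)) x :=
          Finset.sum_congr rfl fun μ _ => key t μ
      _ = Dvg (fun μ y => J μ (y, jet m (fun i => NU t (Sum.inl i)) y, ct t)) x := rfl
      _ = ∑ a, F a (x, jet m (fun i => NU t (Sum.inl i)) x, ct t)
            * q a (x, jet m (fun i => NU t (Sum.inl i)) x, ct t) := hD.symm
      _ = ψ t := by
          simp only [hψdef, hPfdef]
          rw [← hjetNU t x hx]
          refine Finset.sum_congr rfl fun a _ => ?_
          rw [liftP_jet_eq (F a), liftP_jet_eq (q a), e12 t]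
  -- the derivative of ψ
  have hψ0 : ψ 0 = ∑ a, realizeP m (F a) u G x * realizeP m (q a) u G x := by
    simp only [hψdef, hPfdef, zero_smul, add_zero]
    refine Finset.sum_congr rfl fun a _ => ?_
    rw [liftP_jet_eq (F a), liftP_jet_eq (q a)]
    rfl
  have hψder : HasDerivAt ψ (ω * ψ 0) 0 := by
    have h0 := hasDerivAt_line hPf x (jet m U x) (jet m V x) 0
    have hval : fderiv ℝ Pf (x, jet m U x + (0:ℝ) • jet m V x) ((0 : Ed D), jet m V x)
        = ω * ψ 0 := by
      rw [zero_smul, add_zero,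
        fderiv_apply_jet (hPf.differentiable hle _) (jet m V x)]
      have hvar : (∑ cc : (Fin N ⊕ Fin P) × MIdx m D,
          jpd Pf cc (x, jet m U x) * jet m V x cc) = variation m Pf U V x := rfl
      rw [hvar]
      have h5 := hi u G hu hGs x hx
      rw [← hUdef] at h5
      rw [← hVdef] at h5
      rw [h5, hψ0]
    exact hval ▸ h0
  -- pd of the variation current
  have hvar_ev : ∀ μ, (fun y => variation m (liftP (J μ)) U V y) =ᶠ[nhds x]
      (fun y => fderiv ℝ (Φ μ) ((0:ℝ), y) ((1:ℝ), (0 : Ed D))) := by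
    intro μ
    refine Filter.eventuallyEq_of_mem hΩx fun y hy => ?_
    have hA := slice_hasDerivAt (hΦd μ 0 y hy)
    have hB : HasDerivAt (fun s => Φ μ (s, y))
        (fderiv ℝ (liftP (J μ)) (y, jet m U y + (0:ℝ) • jet m V y) ((0:Ed D), jet m V y)) 0 :=
      hasDerivAt_line (contDiff_liftP (hJ μ)) y (jet m U y) (jet m V y) 0
    have h6 := hA.unique hB
    show variation m (liftP (J μ)) U V y = _
    rw [h6, zero_smul, add_zero,
      fderiv_apply_jet ((contDiff_liftP (hJ μ)).differentiable hle _) (jet m V y)]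
    rfl
  have hvar_pd : ∀ μ, pd μ (fun y => variation m (liftP (J μ)) U V y) x
      = fderiv ℝ (fderiv ℝ (Φ μ)) ((0:ℝ), x) ((1:ℝ), (0:Ed D)) ((0:ℝ), Pi.single μ 1) := by
    intro μ
    rw [pd_congr_nhds (hvar_ev μ) μ, snd_pd (hΦ2 μ) _ μ]
    exact (hsymm μ) _ _
  -- derivative of φ and uniqueness
  have hHder : HasDerivAt (fun t => ∑ μ, fderiv ℝ (Φ μ) (t, x) ((0:ℝ), Pi.single μ 1))
      (∑ μ, fderiv ℝ (fderiv ℝ (Φ μ)) ((0:ℝ), x) ((1:ℝ), (0:Ed D)) ((0:ℝ), Pi.single μ 1)) 0 :=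
    HasDerivAt.fun_sum fun μ _ => snd_t (hΦ2 μ) _
  have hfun : (fun t => ∑ μ, fderiv ℝ (Φ μ) (t, x) ((0:ℝ), Pi.single μ 1)) = ψ := funext hφψ
  rw [hfun] at hHder
  have huniq : (∑ μ, fderiv ℝ (fderiv ℝ (Φ μ)) ((0:ℝ), x) ((1:ℝ), (0:Ed D))
      ((0:ℝ), Pi.single μ 1)) = ω * ψ 0 := hHder.unique hψder
  -- ψ 0 as the divergence of the original current
  have hreal : ∀ μ, realizeP m (J μ) u G = fun z => Φ μ ((0:ℝ), z) := by
    intro μ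
    funext z
    show _ = liftP (J μ) (z, jet m U z + (0:ℝ) • jet m V z)
    rw [zero_smul, add_zero, liftP_jet_eq]
    rfl
  have hψ0sum : ψ 0 = ∑ μ, pd μ (realizeP m (J μ) u G) x := by
    rw [← hφψ 0]
    refine Finset.sum_congr rfl fun μ _ => ?_
    rw [← slice_pd (hΦd μ 0 x hx) μ, hreal μ]
  -- final assembly
  have hreal_d : ∀ μ, DifferentiableAt ℝ (realizeP m (J μ) u G) x := by
    intro μ
    rw [hreal μ]
    have hin : HasFDerivAt (fun z : Ed D => (((0:ℝ), z) : ℝ × Ed D))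
        ((0 : Ed D →L[ℝ] ℝ).prod (ContinuousLinearMap.id ℝ (Ed D))) x :=
      (hasFDerivAt_const (0:ℝ) x).prodMk (hasFDerivAt_id x)
    exact ((hΦd μ 0 x hx).hasFDerivAt.comp x hin).differentiableAt
  have hvar_d : ∀ μ, DifferentiableAt ℝ (fun y => variation m (liftP (J μ)) U V y) x :=
    fun μ => ((hvar_ev μ).differentiableAt_iff).2 (snd_pd_diff (hΦ2 μ) _)
  show (∑ μ, pd μ (fun y => variation m (liftP (J μ)) U V y
      - ω * realizeP m (J μ) u G y) x) = 0
  have hsplit : ∀ μ, pd μ (fun y => variation m (liftP (J μ)) U V y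
        - ω * realizeP m (J μ) u G y) x
      = pd μ (fun y => variation m (liftP (J μ)) U V y) x
        - ω * pd μ (realizeP m (J μ) u G) x :=
    fun μ => pd_sub_const_mul (hvar_d μ) (hreal_d μ) ω μ
  calc (∑ μ, pd μ (fun y => variation m (liftP (J μ)) U V y
      - ω * realizeP m (J μ) u G y) x)
      = ∑ μ, (pd μ (fun y => variation m (liftP (J μ)) U V y) x
          - ω * pd μ (realizeP m (J μ) u G) x) := Finset.sum_congr rfl fun μ _ => hsplit μ
    _ = (∑ μ, pd μ (fun y => variation m (liftP (J μ)) U V y) x)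
          - ω * ∑ μ, pd μ (realizeP m (J μ) u G) x := by
        rw [Finset.sum_sub_distrib, Finset.mul_sum]
    _ = (∑ μ, fderiv ℝ (fderiv ℝ (Φ μ)) ((0:ℝ), x) ((1:ℝ), (0:Ed D))
          ((0:ℝ), Pi.single μ 1)) - ω * ψ 0 := by
        rw [← hψ0sum]
        congr 1
        exact Finset.sum_congr rfl fun μ _ => hvar_pd μ
    _ = 0 := by rw [huniq]; ring

end Paper
end
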